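/- Let a ≥ 0, b > 0, σ > 0, and let ν be a measure on (0,∞) with ∫_0^∞ (z∧1) ν(dz) < ∞ and ∫_{(1,∞)} log z ν(dz) < ∞. Define, for x ≥ 0, (AV)(x) := (a − bx)/(1+x) − σ²x/(2(1+x)²) + ∫_0^∞ log(1 + z/(1+x)) ν(dz). Then there exist positive constants c and M and a compact set K ⊂ [0,∞) such that (AV)(x) ≤ −c + M·1_K(x) for all x ≥ 0. -/

import Mathlib

open MeasureTheory Filter Set
open scoped ENNReal
open scoped Topology

/-- The generator of the jump-diffusion CIR process applied to the Foster-Lyapunov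
function `V(x) = log(1+x)`. -/
noncomputable def AV (a b σ : ℝ) (ν : Measure ℝ) (x : ℝ) : ℝ :=
  (a - b * x) / (1 + x) - σ ^ 2 * x / (2 * (1 + x) ^ 2) +
    ∫ z in Set.Ioi (0 : ℝ), Real.log (1 + z / (1 + x)) ∂ν

/-- Pointwise domination of the log integrand. -/
lemma AV_log_le (T x z : ℝ) (hT : 1 ≤ T) (hx : 0 ≤ x) (hz : 0 < z) :
    Real.log (1 + z / (1 + x)) ≤ (T / (1 + x)) * min z 1 +
      Set.indicator (Set.Ioi T) (fun z => Real.log 2 + Real.log z) z := by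
  have h1x : (0:ℝ) < 1 + x := by linarith
  rcases le_or_gt z T with hzT | hzT
  · rw [Set.indicator_of_notMem (by simpa using hzT)]
    have hu : (0:ℝ) < z / (1 + x) := div_pos hz h1x
    have h1 : Real.log (1 + z / (1 + x)) ≤ z / (1 + x) := by
      have := Real.log_le_sub_one_of_pos (x := 1 + z / (1 + x)) (by linarith)
      linarith
    have h2 : z ≤ T * min z 1 := by
      rcases le_total z 1 with h | h
      · rw [min_eq_left h]; nlinarith
      · rw [min_eq_right h]; linarith
    have h3 : z / (1 + x) ≤ (T * min z 1) / (1 + x) := by gcongr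
    rw [mul_comm, ← mul_div_assoc, mul_comm]
    linarith
  · rw [Set.indicator_of_mem (by simpa using hzT)]
    have hz1 : (1:ℝ) ≤ z := le_trans hT hzT.le
    have hfirst : 0 ≤ (T / (1 + x)) * min z 1 := by positivity
    have harg : 1 + z / (1 + x) ≤ 2 * z := by
      have : z / (1 + x) ≤ z := div_le_self hz.le (by linarith)
      linarith
    have hlog : Real.log (1 + z / (1 + x)) ≤ Real.log (2 * z) := by
      apply Real.log_le_log (by positivity) harg
    rw [Real.log_mul (by norm_num) (ne_of_gt hz)] at hlog
    linarith

theorem AV_foster_lyapunov_drift (a b σ : ℝ) (ha : 0 ≤ a) (hb : 0 < b) (hσ : 0 < σ)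
    (ν : Measure ℝ) (hνsupp : ν (Set.Iic 0) = 0)
    (hν : ∫⁻ z in Set.Ioi (0 : ℝ), ENNReal.ofReal (min z 1) ∂ν < ⊤)
    (hνlog : ∫⁻ z in Set.Ioi (1 : ℝ), ENNReal.ofReal (Real.log z) ∂ν < ⊤) :
    ∃ c : ℝ, 0 < c ∧ ∃ M : ℝ, 0 < M ∧ ∃ K : Set ℝ, IsCompact K ∧ K ⊆ Set.Ici 0 ∧
      ∀ x : ℝ, 0 ≤ x → AV a b σ ν x ≤ -c + Set.indicator K (fun _ => M) x := by
  -- the measure of (1,∞) is finite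
  have h1fin : ν (Set.Ioi (1:ℝ)) < ⊤ := by
    have he : ν (Set.Ioi (1:ℝ)) = ∫⁻ z in Set.Ioi (1:ℝ), ENNReal.ofReal (min z 1) ∂ν := by
      rw [← setLIntegral_one]
      refine setLIntegral_congr_fun measurableSet_Ioi (fun z hz => ?_)
      rw [min_eq_right (le_of_lt hz)]; simp
    rw [he]
    exact lt_of_le_of_lt (lintegral_mono_set (Set.Ioi_subset_Ioi zero_le_one)) hν
  set h : ℝ → ℝ := fun z => Real.log 2 + Real.log z with hh
  have hmeas : Measurable fun z => ENNReal.ofReal (h z) :=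
    (measurable_const.add Real.measurable_log).ennreal_ofReal
  set μ' := ν.withDensity (fun z => ENNReal.ofReal (h z)) with hμ'
  have hμ'app : ∀ s : ℝ, μ' (Set.Ioi s) = ∫⁻ z in Set.Ioi s, ENNReal.ofReal (h z) ∂ν :=
    fun s => withDensity_apply _ measurableSet_Ioi
  have hμ'1 : μ' (Set.Ioi 1) < ⊤ := by
    rw [hμ'app]
    calc ∫⁻ z in Set.Ioi (1:ℝ), ENNReal.ofReal (h z) ∂ν
        ≤ ∫⁻ z in Set.Ioi (1:ℝ),
            (ENNReal.ofReal (Real.log 2) + ENNReal.ofReal (Real.log z)) ∂ν :=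
          lintegral_mono fun z => ENNReal.ofReal_add_le
      _ = ENNReal.ofReal (Real.log 2) * ν (Set.Ioi 1) +
            ∫⁻ z in Set.Ioi (1:ℝ), ENNReal.ofReal (Real.log z) ∂ν := by
          rw [lintegral_add_left measurable_const, setLIntegral_const]
      _ < ⊤ := by
          exact ENNReal.add_lt_top.2 ⟨ENNReal.mul_lt_top ENNReal.ofReal_lt_top h1fin, hνlog⟩
  -- choose a tail cutoff T with small tail
  obtain ⟨n₀, hn₀⟩ : ∃ n : ℕ, μ' (Set.Ioi (1 + (n:ℝ))) < ENNReal.ofReal (b / 4) := by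
    have hanti : Antitone (fun n : ℕ => Set.Ioi (1 + (n:ℝ))) := fun m n hmn =>
      Set.Ioi_subset_Ioi (by have : (m:ℝ) ≤ n := Nat.cast_le.2 hmn; linarith)
    have hiInter : (⋂ n : ℕ, Set.Ioi (1 + (n:ℝ))) = ∅ := by
      rw [Set.eq_empty_iff_forall_notMem]
      intro x hx
      obtain ⟨n, hn⟩ := exists_nat_ge x
      have := Set.mem_iInter.1 hx n
      simp only [Set.mem_Ioi] at this
      linarith
    have htend : Tendsto (fun n : ℕ => μ' (Set.Ioi (1 + (n:ℝ)))) atTop (𝓝 0) := by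
      have hfin0 : μ' (Set.Ioi (1 + ((0:ℕ):ℝ))) ≠ ⊤ := by
        rw [(by norm_num : (1:ℝ) + ((0:ℕ):ℝ) = 1)]; exact hμ'1.ne
      have := tendsto_measure_iInter_atTop (μ := μ')
        (s := fun n : ℕ => Set.Ioi (1 + (n:ℝ)))
        (fun n => measurableSet_Ioi.nullMeasurableSet) hanti ⟨0, hfin0⟩
      rw [hiInter] at this
      simpa [Function.comp_def] using this
    have := htend.eventually_lt_const (ENNReal.ofReal_pos.2 (by linarith : (0:ℝ) < b / 4))
    exact this.exists
  set T : ℝ := 1 + (n₀ : ℝ) with hTdef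
  have hT : (1:ℝ) ≤ T := by
    have : (0:ℝ) ≤ (n₀:ℝ) := Nat.cast_nonneg n₀
    rw [hTdef]; linarith
  set I : ℝ := (∫⁻ z in Set.Ioi (0:ℝ), ENNReal.ofReal (min z 1) ∂ν).toReal with hIdef
  set J : ℝ := (μ' (Set.Ioi T)).toReal with hJdef
  have hI0 : 0 ≤ I := ENNReal.toReal_nonneg
  have hJ0 : 0 ≤ J := ENNReal.toReal_nonneg
  have hJb : J ≤ b / 4 :=
    ENNReal.toReal_le_of_le_ofReal (by linarith) hn₀.le
  -- integrability of min z 1 on (0,∞)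
  have hminmeas : Measurable fun z : ℝ => min z 1 := measurable_id.min measurable_const
  have hint_min : Integrable (fun z => min z 1) (ν.restrict (Set.Ioi 0)) := by
    refine ⟨hminmeas.aestronglyMeasurable, ?_⟩
    rw [hasFiniteIntegral_iff_norm]
    have he : ∫⁻ z in Set.Ioi (0:ℝ), ENNReal.ofReal ‖min z 1‖ ∂ν
        = ∫⁻ z in Set.Ioi (0:ℝ), ENNReal.ofReal (min z 1) ∂ν := by
      refine setLIntegral_congr_fun measurableSet_Ioi (fun z hz => ?_)
      rw [Real.norm_eq_abs, abs_of_nonneg (le_min (le_of_lt hz) zero_le_one)]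
    rw [he]; exact hν
  have hmin_nonneg : 0 ≤ᵐ[ν.restrict (Set.Ioi 0)] fun z => min z 1 :=
    (ae_restrict_iff' measurableSet_Ioi).2
      (ae_of_all _ fun z hz => le_min (le_of_lt hz) zero_le_one)
  have hImin : ∫ z in Set.Ioi (0:ℝ), min z 1 ∂ν = I := by
    rw [integral_eq_lintegral_of_nonneg_ae hmin_nonneg hminmeas.aestronglyMeasurable, hIdef]
  -- integrability of h on (T,∞)
  have hTpos : (0:ℝ) < T := lt_of_lt_of_le one_pos hT
  have hrr : (ν.restrict (Set.Ioi 0)).restrict (Set.Ioi T) = ν.restrict (Set.Ioi T) := by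
    rw [Measure.restrict_restrict measurableSet_Ioi, Set.Ioi_inter_Ioi,
      max_eq_left hTpos.le]
  have hhmeasR : Measurable h := measurable_const.add Real.measurable_log
  have hh_nonneg : 0 ≤ᵐ[ν.restrict (Set.Ioi T)] h :=
    (ae_restrict_iff' measurableSet_Ioi).2
      (ae_of_all _ fun z hz => by
        have h2 : (0:ℝ) ≤ Real.log 2 := Real.log_nonneg one_le_two
        have h3 : (0:ℝ) ≤ Real.log z := Real.log_nonneg (le_trans hT (le_of_lt hz))
        show (0:ℝ) ≤ Real.log 2 + Real.log z
        linarith)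
  have hint_h : Integrable h (ν.restrict (Set.Ioi T)) := by
    refine ⟨hhmeasR.aestronglyMeasurable, ?_⟩
    rw [hasFiniteIntegral_iff_norm]
    have he : ∫⁻ z in Set.Ioi T, ENNReal.ofReal ‖h z‖ ∂ν
        = ∫⁻ z in Set.Ioi T, ENNReal.ofReal (h z) ∂ν := by
      refine setLIntegral_congr_fun measurableSet_Ioi (fun z hz => ?_)
      have h2 : (0:ℝ) ≤ Real.log 2 := Real.log_nonneg one_le_two
      have h3 : (0:ℝ) ≤ Real.log z := Real.log_nonneg (le_trans hT (le_of_lt hz))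
      rw [Real.norm_eq_abs, abs_of_nonneg (by simp only [hh]; linarith)]
    rw [he, ← hμ'app]
    exact lt_of_le_of_lt (measure_mono (Set.Ioi_subset_Ioi hT)) hμ'1
  have hJeq : ∫ z in Set.Ioi T, h z ∂ν = J := by
    rw [integral_eq_lintegral_of_nonneg_ae hh_nonneg hhmeasR.aestronglyMeasurable,
      hJdef, hμ'app]
  -- key estimate for the jump integral
  have key : ∀ x : ℝ, 0 ≤ x →
      (∫ z in Set.Ioi (0:ℝ), Real.log (1 + z / (1 + x)) ∂ν) ≤ (T / (1 + x)) * I + J := by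
    intro x hx
    have h1x : (0:ℝ) < 1 + x := by linarith
    set g : ℝ → ℝ := fun z => (T / (1 + x)) * min z 1 +
      Set.indicator (Set.Ioi T) h z with hg
    have hind_int : Integrable (Set.indicator (Set.Ioi T) h) (ν.restrict (Set.Ioi 0)) := by
      rw [integrable_indicator_iff measurableSet_Ioi]
      unfold IntegrableOn
      rw [hrr]
      exact hint_h
    have hgi : Integrable g (ν.restrict (Set.Ioi 0)) :=
      (hint_min.const_mul _).add hind_int
    have hf0 : 0 ≤ᵐ[ν.restrict (Set.Ioi 0)] fun z => Real.log (1 + z / (1 + x)) :=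
      (ae_restrict_iff' measurableSet_Ioi).2 (ae_of_all _ fun z hz => by
        apply Real.log_nonneg
        have : 0 ≤ z / (1 + x) := div_nonneg (le_of_lt hz) h1x.le
        linarith)
    have hfg : (fun z => Real.log (1 + z / (1 + x))) ≤ᵐ[ν.restrict (Set.Ioi 0)] g :=
      (ae_restrict_iff' measurableSet_Ioi).2 (ae_of_all _ fun z hz =>
        AV_log_le T x z hT hx hz)
    calc ∫ z in Set.Ioi (0:ℝ), Real.log (1 + z / (1 + x)) ∂ν
        ≤ ∫ z in Set.Ioi (0:ℝ), g z ∂ν := integral_mono_of_nonneg hf0 hgi hfg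
      _ = (T / (1 + x)) * I + J := by
          rw [hg]
          rw [integral_add (hint_min.const_mul _) hind_int, integral_const_mul,
            hImin, integral_indicator measurableSet_Ioi,
            Measure.restrict_restrict measurableSet_Ioi, Set.Ioi_inter_Ioi,
            max_eq_left hTpos.le, hJeq]
  -- global drift bound
  set S : ℝ := a + b + T * I with hSdef
  have hS : 0 < S := by positivity
  have hAV : ∀ x : ℝ, 0 ≤ x → AV a b σ ν x ≤ S / (1 + x) - b + J := by
    intro x hx
    have h1x : (0:ℝ) < 1 + x := by linarith
    have e1 : (a - b * x) / (1 + x) = (a + b) / (1 + x) - b := by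
      field_simp
      ring
    have e2 : 0 ≤ σ ^ 2 * x / (2 * (1 + x) ^ 2) := by positivity
    have e3 : (a + b) / (1 + x) + (T / (1 + x)) * I = S / (1 + x) := by
      rw [hSdef]; field_simp
    have hk := key x hx
    show (a - b * x) / (1 + x) - σ ^ 2 * x / (2 * (1 + x) ^ 2) +
        (∫ z in Set.Ioi (0:ℝ), Real.log (1 + z / (1 + x)) ∂ν) ≤ S / (1 + x) - b + J
    rw [e1]
    linarith
  -- choose constants
  set R : ℝ := 4 * S / b with hRdef
  have hR0 : 0 < R := by positivity
  refine ⟨b / 2, by linarith, S + b + 1, by linarith, Set.Icc 0 R, isCompact_Icc,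
    fun y hy => hy.1, ?_⟩
  intro x hx
  have h1x : (0:ℝ) < 1 + x := by linarith
  have hAVx := hAV x hx
  by_cases hxR : x ≤ R
  · rw [Set.indicator_of_mem (Set.mem_Icc.2 ⟨hx, hxR⟩)]
    have : S / (1 + x) ≤ S := by
      apply div_le_self hS.le
      linarith
    linarith
  · push_neg at hxR
    rw [Set.indicator_of_notMem (fun hmem => absurd (Set.mem_Icc.1 hmem).2 (not_le.2 hxR))]
    have hbound : S / (1 + x) ≤ b / 4 := by
      rw [div_le_iff₀ h1x]
      have : b * x > 4 * S := by
        calc b * x > b * R := by exact (mul_lt_mul_iff_right₀ hb).2 hxR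
          _ = 4 * S := by rw [hRdef]; field_simp
      nlinarith
    linarith
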